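/- The number of independent sets of size i in the k-Catalan matroid M^k_n equals ((k+1)(n−i)+1)/((k+1)n+1) * binomial((k+1)n+1, i). -/

import Mathlib

/-- `X` is a partial transversal of the interval system `(N_j = [lo j, hi j])_{j : Fin r}`. -/
def IsPT (r : ℕ) (lo hi : Fin r → ℕ) (X : Finset ℕ) : Prop :=
  ∃ f : X → Fin r, Function.Injective f ∧ ∀ x : X, lo (f x) ≤ (x : ℕ) ∧ (x : ℕ) ≤ hi (f x)


def goodSet (k m i : ℕ) : Finset (Finset ℕ) :=
  ((Finset.Icc 1 m).powersetCard i).filter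
    (fun X => ∀ x ∈ X, (k + 1) * (X.filter (· ≤ x)).card ≤ x)

lemma mem_goodSet {k m i : ℕ} {X : Finset ℕ} : X ∈ goodSet k m i ↔
    (X ⊆ Finset.Icc 1 m ∧ X.card = i) ∧ ∀ x ∈ X, (k + 1) * (X.filter (· ≤ x)).card ≤ x := by
  simp [goodSet, Finset.mem_powersetCard, and_assoc]

lemma goodSet_zero (k m : ℕ) : (goodSet k m 0).card = 1 := by
  rw [goodSet, Finset.powersetCard_zero]
  rw [Finset.filter_singleton]
  simp

lemma goodSet_eq_empty {k m i : ℕ} (h : m < (k + 1) * i) : goodSet k m i = ∅ := by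
  ext X
  simp only [mem_goodSet, Finset.notMem_empty, iff_false]
  rintro ⟨⟨hsub, hcard⟩, hg⟩
  have hi0 : 0 < i := by
    rcases Nat.eq_zero_or_pos i with rfl | h'
    · simp at h
    · exact h'
  have hne : X.Nonempty := by rw [← Finset.card_pos, hcard]; exact hi0
  have hxm : X.max' hne ≤ m := (Finset.mem_Icc.mp (hsub (X.max'_mem hne))).2
  have hfil : X.filter (· ≤ X.max' hne) = X :=
    Finset.filter_true_of_mem (fun y hy => Finset.le_max' _ _ hy)
  have := hg _ (X.max'_mem hne)
  rw [hfil, hcard] at this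
  omega

lemma goodSet_succ (k m i : ℕ) (hip : 1 ≤ i) (h : (k + 1) * i ≤ m + 1) :
    (goodSet k (m + 1) i).card = (goodSet k m i).card + (goodSet k m (i - 1)).card := by
  have hsplit := Finset.card_filter_add_card_filter_not
    (s := goodSet k (m + 1) i) (p := fun X => (m + 1) ∈ X)
  have hnot : (goodSet k (m + 1) i).filter (fun X => ¬ (m + 1) ∈ X) = goodSet k m i := by
    ext X
    simp only [Finset.mem_filter, mem_goodSet]
    constructor
    · rintro ⟨⟨⟨hsub, hcard⟩, hg⟩, hm⟩
      refine ⟨⟨fun x hx => ?_, hcard⟩, hg⟩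
      have := Finset.mem_Icc.mp (hsub hx)
      have hne : x ≠ m + 1 := fun he => hm (he ▸ hx)
      exact Finset.mem_Icc.mpr ⟨this.1, by omega⟩
    · rintro ⟨⟨hsub, hcard⟩, hg⟩
      have hm : (m + 1) ∉ X := fun hmem => by
        have := Finset.mem_Icc.mp (hsub hmem); omega
      refine ⟨⟨⟨fun x hx => ?_, hcard⟩, hg⟩, hm⟩
      have := Finset.mem_Icc.mp (hsub hx)
      exact Finset.mem_Icc.mpr ⟨this.1, by omega⟩
  have hbij : ((goodSet k (m + 1) i).filter (fun X => (m + 1) ∈ X)).card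
      = (goodSet k m (i - 1)).card := by
    apply Finset.card_bij' (i := fun X _ => X.erase (m + 1)) (j := fun Y _ => insert (m + 1) Y)
    · -- left inverse
      intro X hX
      rw [Finset.mem_filter] at hX
      exact Finset.insert_erase hX.2
    · -- right inverse
      intro Y hY
      rw [mem_goodSet] at hY
      have hm : (m + 1) ∉ Y := fun hmem => by
        have := Finset.mem_Icc.mp (hY.1.1 hmem); omega
      exact Finset.erase_insert hm
    · -- forward maps into target
      intro X hX
      rw [Finset.mem_filter, mem_goodSet] at hX
      obtain ⟨⟨⟨hsub, hcard⟩, hg⟩, hm⟩ := hX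
      rw [mem_goodSet]
      refine ⟨⟨fun x hx => ?_, ?_⟩, ?_⟩
      · have hx' := Finset.mem_erase.mp hx
        have := Finset.mem_Icc.mp (hsub hx'.2)
        exact Finset.mem_Icc.mpr ⟨this.1, by omega⟩
      · rw [Finset.card_erase_of_mem hm, hcard]
      · intro x hx
        have hx' := Finset.mem_erase.mp hx
        have hxle : x ≤ m := by
          have := Finset.mem_Icc.mp (hsub hx'.2); omega
        have hfil : (X.erase (m + 1)).filter (· ≤ x) = X.filter (· ≤ x) := by
          ext z
          simp only [Finset.mem_filter, Finset.mem_erase]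
          constructor
          · rintro ⟨⟨_, hz⟩, hzx⟩; exact ⟨hz, hzx⟩
          · rintro ⟨hz, hzx⟩; exact ⟨⟨by omega, hz⟩, hzx⟩
        rw [hfil]
        exact hg x hx'.2
    · -- backward maps into source
      intro Y hY
      rw [mem_goodSet] at hY
      obtain ⟨⟨hsub, hcard⟩, hg⟩ := hY
      have hm : (m + 1) ∉ Y := fun hmem => by
        have := Finset.mem_Icc.mp (hsub hmem); omega
      rw [Finset.mem_filter, mem_goodSet]
      refine ⟨⟨⟨fun x hx => ?_, ?_⟩, ?_⟩, Finset.mem_insert_self _ _⟩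
      · rcases Finset.mem_insert.mp hx with rfl | hx'
        · exact Finset.mem_Icc.mpr ⟨by omega, le_refl _⟩
        · have := Finset.mem_Icc.mp (hsub hx')
          exact Finset.mem_Icc.mpr ⟨this.1, by omega⟩
      · rw [Finset.card_insert_of_notMem hm, hcard]; omega
      · intro x hx
        rcases Finset.mem_insert.mp hx with rfl | hx'
        · have hfil : (insert (m + 1) Y).filter (· ≤ m + 1) = insert (m + 1) Y := by
            apply Finset.filter_true_of_mem
            intro y hy
            rcases Finset.mem_insert.mp hy with rfl | hy'
            · exact le_refl _
            · have := Finset.mem_Icc.mp (hsub hy'); omega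
          rw [hfil, Finset.card_insert_of_notMem hm, hcard]
          have e : i - 1 + 1 = i := by omega
          rw [e]; exact h
        · have hxle : x ≤ m := by have := Finset.mem_Icc.mp (hsub hx'); omega
          have hfil : (insert (m + 1) Y).filter (· ≤ x) = Y.filter (· ≤ x) := by
            ext z
            simp only [Finset.mem_filter, Finset.mem_insert]
            constructor
            · rintro ⟨rfl | hz, hzx⟩
              · omega
              · exact ⟨hz, hzx⟩
            · rintro ⟨hz, hzx⟩; exact ⟨Or.inr hz, hzx⟩
          rw [hfil]
          exact hg x hx'
  rw [hnot, hbij] at hsplit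
  omega

lemma goodSet_card (k : ℕ) : ∀ m i, (k + 1) * i ≤ m →
    (goodSet k m i).card * (m + 1) = (m + 1 - (k + 1) * i) * Nat.choose (m + 1) i := by
  intro m
  induction m with
  | zero =>
    intro i h
    have hi0 : i = 0 := by
      rcases Nat.eq_zero_or_pos i with h' | h'
      · exact h'
      · have := Nat.le_mul_of_pos_left i (show 0 < k + 1 by omega)
        omega
    subst hi0
    rw [goodSet_zero]
    simp
  | succ m ih =>
    intro i h
    rcases Nat.eq_zero_or_pos i with rfl | hip
    · rw [goodSet_zero]; simp
    rw [goodSet_succ k m i hip h]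
    have e : i - 1 + 1 = i := by omega
    have hsub : (k + 1) * (i - 1) + (k + 1) = (k + 1) * i := by
      calc (k + 1) * (i - 1) + (k + 1) = (k + 1) * ((i - 1) + 1) := by ring
        _ = (k + 1) * i := by rw [e]
    have h1 : (goodSet k m i).card * (m + 1) = (m + 1 - (k + 1) * i) * Nat.choose (m + 1) i := by
      rcases le_or_gt ((k + 1) * i) m with h' | h'
      · exact ih i h'
      · rw [goodSet_eq_empty h']
        have e' : m + 1 - (k + 1) * i = 0 := by omega
        rw [e']; simp
    have h2 : (goodSet k m (i - 1)).card * (m + 1)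
        = (m + 1 - (k + 1) * (i - 1)) * Nat.choose (m + 1) (i - 1) := ih (i - 1) (by omega)
    have h3 : Nat.choose (m + 1) i * i = Nat.choose (m + 1) (i - 1) * (m + 1 - (i - 1)) := by
      have h3' := Nat.choose_succ_right_eq (m + 1) (i - 1)
      rwa [e] at h3'
    have h4 : Nat.choose (m + 1 + 1) i
        = Nat.choose (m + 1) (i - 1) + Nat.choose (m + 1) i := by
      have h4' := Nat.choose_succ_succ (m + 1) (i - 1)
      simp only [Nat.succ_eq_add_one, e] at h4'
      exact h4'
    have him : i ≤ m + 1 := by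
      have := Nat.le_mul_of_pos_left i (show 0 < k + 1 by omega)
      omega
    have hi1 : i - 1 ≤ m + 1 := by omega
    have ha : (k + 1) * i ≤ m + 1 := h
    have ha' : (k + 1) * (i - 1) ≤ m + 1 := by omega
    have hb : (k + 1) * i ≤ m + 1 + 1 := by omega
    have h4' : ((Nat.choose (m + 1 + 1) i : ℤ))
        = Nat.choose (m + 1) (i - 1) + Nat.choose (m + 1) i := by exact_mod_cast h4
    apply Nat.eq_of_mul_eq_mul_right (Nat.succ_pos m)
    zify [ha, ha', hip, hi1, him, hb] at h1 h2 h3 ⊢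
    linear_combination ((m : ℤ) + 2) * h1 + ((m : ℤ) + 2) * h2 - ((k : ℤ) + 1) * h3
      - (((m : ℤ) + 2 - ((k : ℤ) + 1) * i) * ((m : ℤ) + 1)) * h4'

lemma isPT_iff (k n i : ℕ) (X : Finset ℕ) (hX : X ⊆ Finset.Icc 1 ((k + 1) * n))
    (hc : X.card = i) (hin : i ≤ n) :
    IsPT n (fun j => (k + 1) * ((j : ℕ) + 1)) (fun j => k * n + (j : ℕ) + 1) X ↔
      ∀ x ∈ X, (k + 1) * (X.filter (· ≤ x)).card ≤ x := by
  constructor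
  · rintro ⟨f, finj, hf⟩ x hx
    set F : ℕ → ℕ := fun y => if h : y ∈ X then ((f ⟨y, h⟩ : Fin n) : ℕ) else 0 with hF
    have hcard : (X.filter (· ≤ x)).card ≤ (Finset.range (x / (k + 1))).card := by
      apply Finset.card_le_card_of_injOn F
      · intro y hy
        rw [Finset.mem_coe, Finset.mem_filter] at hy
        obtain ⟨hyX, hyx⟩ := hy
        rw [Finset.mem_coe, Finset.mem_range, hF]
        simp only [dif_pos hyX]
        have hlo := (hf ⟨y, hyX⟩).1
        simp only at hlo
        have hcomm : (((f ⟨y, hyX⟩ : Fin n) : ℕ) + 1) * (k + 1)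
            = (k + 1) * (((f ⟨y, hyX⟩ : Fin n) : ℕ) + 1) := Nat.mul_comm _ _
        have : ((f ⟨y, hyX⟩ : Fin n) : ℕ) + 1 ≤ x / (k + 1) := by
          rw [Nat.le_div_iff_mul_le (by omega : 0 < k + 1)]
          omega
        omega
      · intro y hy z hz hyz
        rw [Finset.coe_filter, Set.mem_setOf_eq] at hy hz
        rw [hF] at hyz
        simp only [dif_pos hy.1, dif_pos hz.1] at hyz
        exact congrArg Subtype.val (finj (Fin.val_injective hyz))
    rw [Finset.card_range] at hcard
    calc (k + 1) * (X.filter (· ≤ x)).card ≤ (k + 1) * (x / (k + 1)) :=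
          Nat.mul_le_mul_left _ hcard
      _ ≤ x := Nat.mul_div_le x (k + 1)
  · intro hg
    have hkn : (k + 1) * n = k * n + n := by ring
    have hfacts : ∀ y ∈ X,
        1 ≤ max ((X.filter (· ≤ y)).card) (y - k * n) ∧
        max ((X.filter (· ≤ y)).card) (y - k * n) ≤ n ∧
        (k + 1) * max ((X.filter (· ≤ y)).card) (y - k * n) ≤ y ∧
        y ≤ k * n + max ((X.filter (· ≤ y)).card) (y - k * n) := by
      intro y hy
      have hy' := Finset.mem_Icc.mp (hX hy)
      have hc1 : 1 ≤ (X.filter (· ≤ y)).card := by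
        rw [Nat.one_le_iff_ne_zero, Ne, Finset.card_eq_zero]
        intro hemp
        have : y ∈ X.filter (· ≤ y) := Finset.mem_filter.mpr ⟨hy, le_refl y⟩
        rw [hemp] at this
        exact absurd this (Finset.notMem_empty y)
      have hcn : (X.filter (· ≤ y)).card ≤ n :=
        le_trans (Finset.card_le_card (Finset.filter_subset _ _)) (hc ▸ hin)
      have hb1 : (k + 1) * ((X.filter (· ≤ y)).card) ≤ y := hg y hy
      have hb2 : (k + 1) * (y - k * n) ≤ y := by
        rcases le_or_gt y (k * n) with h' | h'
        · have h0 : y - k * n = 0 := by omega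
          rw [h0]
          simp
        · have hd : y - k * n ≤ n := by omega
          calc (k + 1) * (y - k * n) = k * (y - k * n) + (y - k * n) := by ring
            _ ≤ k * n + (y - k * n) := by
                have := Nat.mul_le_mul_left k hd; omega
            _ = y := by omega
      refine ⟨le_trans hc1 (le_max_left _ _), max_le hcn (by omega), ?_,
        le_trans (by omega) (Nat.add_le_add_left (le_max_right _ _) (k * n))⟩
      rcases max_cases ((X.filter (· ≤ y)).card) (y - k * n) with ⟨he, _⟩ | ⟨he, _⟩ <;>
        rw [he]
      · exact hb1
      · exact hb2
    have hmono : ∀ a ∈ X, ∀ b ∈ X, a < b →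
        max ((X.filter (· ≤ a)).card) (a - k * n) <
          max ((X.filter (· ≤ b)).card) (b - k * n) := by
      intro a ha b hb hab
      have hcab : (X.filter (· ≤ a)).card < (X.filter (· ≤ b)).card := by
        apply Finset.card_lt_card
        constructor
        · exact Finset.monotone_filter_right X (fun z _ hz => le_trans hz (le_of_lt hab))
        · intro hsup
          have hbmem : b ∈ X.filter (· ≤ b) := Finset.mem_filter.mpr ⟨hb, le_refl b⟩
          have := Finset.mem_filter.mp (hsup hbmem)
          omega
      apply max_lt
      · exact lt_of_lt_of_le hcab (le_max_left _ _)
      · rcases le_or_gt b (k * n) with hbkn | hbkn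
        · have h0 : a - k * n = 0 := by omega
          rw [h0]
          have hcb : 1 ≤ (X.filter (· ≤ b)).card :=
            Finset.card_pos.mpr ⟨b, Finset.mem_filter.mpr ⟨hb, le_refl b⟩⟩
          exact lt_of_lt_of_le hcb (le_max_left _ _)
        · exact lt_of_lt_of_le (by omega) (le_max_right _ _)
    refine ⟨fun x => ⟨max ((X.filter (· ≤ (x : ℕ))).card) ((x : ℕ) - k * n) - 1, by
        have := hfacts (x : ℕ) x.2; omega⟩, ?_, ?_⟩
    · intro x y hxy
      have hx := hfacts (x : ℕ) x.2
      have hy := hfacts (y : ℕ) y.2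
      rw [Fin.mk.injEq] at hxy
      apply Subtype.ext
      by_contra hne
      rcases lt_trichotomy (x : ℕ) (y : ℕ) with hlt | heq | hlt
      · have := hmono _ x.2 _ y.2 hlt; omega
      · exact hne heq
      · have := hmono _ y.2 _ x.2 hlt; omega
    · intro x
      have hx := hfacts (x : ℕ) x.2
      obtain ⟨h1, h2, h3, h4⟩ := hx
      constructor
      · simp only []
        have e : max ((X.filter (· ≤ (x : ℕ))).card) ((x : ℕ) - k * n) - 1 + 1
            = max ((X.filter (· ≤ (x : ℕ))).card) ((x : ℕ) - k * n) := by omega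
        rw [e]
        exact h3
      · simp only []
        omega

/-- **Independent sets of the k-Catalan matroid.**  The `k`-Catalan matroid `M^k_n`
is the lattice path matroid on `[1, (k+1)n]` with upper path `(E^k N)^n` and lower
path `E^{kn} N^n`, presented by the interval system `N_j = [(k+1)j, kn + j]` for
`j ∈ [n]`; its independent sets are the partial transversals.  For `i ≤ n`, the
number of independent sets of size `i`, multiplied by `(k+1)n + 1`, equals
`((k+1)(n-i) + 1) * ((k+1)n + 1 choose i)`. -/
theorem stmt10 (k n i : ℕ) (hk : 0 < k) (hi : i ≤ n) :
    Nat.card {X : Finset ℕ // X ⊆ Finset.Icc 1 ((k + 1) * n) ∧ X.card = i ∧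
        IsPT n (fun j => (k + 1) * ((j : ℕ) + 1)) (fun j => k * n + (j : ℕ) + 1) X}
      * ((k + 1) * n + 1)
      = ((k + 1) * (n - i) + 1) * Nat.choose ((k + 1) * n + 1) i := by
  have hmn : (k + 1) * i ≤ (k + 1) * n := Nat.mul_le_mul_left _ hi
  have key : ∀ X : Finset ℕ,
      (X ⊆ Finset.Icc 1 ((k + 1) * n) ∧ X.card = i ∧
        IsPT n (fun j => (k + 1) * ((j : ℕ) + 1)) (fun j => k * n + (j : ℕ) + 1) X) ↔
      X ∈ goodSet k ((k + 1) * n) i := by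
    intro X
    rw [mem_goodSet]
    constructor
    · rintro ⟨h1, h2, h3⟩
      exact ⟨⟨h1, h2⟩, (isPT_iff k n i X h1 h2 hi).mp h3⟩
    · rintro ⟨⟨h1, h2⟩, h3⟩
      exact ⟨h1, h2, (isPT_iff k n i X h1 h2 hi).mpr h3⟩
  rw [Nat.card_congr (Equiv.subtypeEquivRight key), Nat.card_eq_finsetCard,
    goodSet_card k ((k + 1) * n) i hmn]
  have e1 : (k + 1) * (n - i) + (k + 1) * i = (k + 1) * n := by
    have : n - i + i = n := by omega
    calc (k + 1) * (n - i) + (k + 1) * i = (k + 1) * ((n - i) + i) := by ring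
      _ = (k + 1) * n := by rw [this]
  have e2 : (k + 1) * n + 1 - (k + 1) * i = (k + 1) * (n - i) + 1 := by omega
  rw [e2]
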